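/- Let R be a commutative domain of characteristic zero and δ : R → R a derivation. If δ is non-zero, then R is a maximal commutative subring of the differential polynomial ring R[x;id_R,δ]. -/

import Mathlib

/-- `δ` is a `σ`-derivation of `R`: it is additive and satisfies the twisted Leibniz rule
`δ(ab) = σ(a)δ(b) + δ(a)b`. -/
def IsSigmaDerivation {R : Type*} [Ring R] (σ : R →+* R) (δ : R → R) : Prop :=
  (∀ a b : R, δ (a + b) = δ a + δ b) ∧ ∀ a b : R, δ (a * b) = σ a * δ b + δ a * b

/-- `S`, together with the ring morphism `f : R →+* S` and the element `x : S`, is an Ore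
extension `R[x;σ,δ]`: the powers `1, x, x², …` form a basis of `S` as a left `R`-module
(i.e. every element of `S` is, in a unique way, a finite sum `Σᵢ f(aᵢ) xⁱ`), and the
commutation rule `x·r = σ(r)·x + δ(r)` holds for all `r ∈ R`. -/
structure IsOreExtension {R S : Type*} [Ring R] [Ring S]
    (σ : R →+* R) (δ : R → R) (f : R →+* S) (x : S) : Prop where
  basis : Function.Bijective fun a : ℕ →₀ R => a.sum fun i r => f r * x ^ i
  rel : ∀ r : R, x * f r = f (σ r) * x + f (δ r)

/-- `R` is `σ`-`δ`-simple: the only two-sided ideals `J` of `R` with `σ(J) ⊆ J` and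
`δ(J) ⊆ J` are `{0}` and `R`. -/
def IsSigmaDeltaSimple {R : Type*} [Ring R] (σ : R →+* R) (δ : R → R) : Prop :=
  ∀ J : TwoSidedIdeal R, (∀ a ∈ J, σ a ∈ J) → (∀ a ∈ J, δ a ∈ J) → J = ⊥ ∨ J = ⊤

/-- `R` is `δ`-simple: the only two-sided ideals `J` of `R` with `δ(J) ⊆ J` are `{0}`
and `R`. -/
def IsDeltaSimple {R : Type*} [Ring R] (δ : R → R) : Prop :=
  ∀ J : TwoSidedIdeal R, (∀ a ∈ J, δ a ∈ J) → J = ⊥ ∨ J = ⊤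

section aux
variable {R S : Type*} [CommRing R] [Ring S] {δ : R → R}

lemma delta_zero (hδ : IsSigmaDerivation (RingHom.id R) δ) : δ 0 = 0 := by
  have h := hδ.1 0 0
  rw [add_zero] at h
  exact (left_eq_add.mp h)

lemma delta_one (hδ : IsSigmaDerivation (RingHom.id R) δ) : δ 1 = 0 := by
  have h := hδ.2 1 1
  simp only [RingHom.id_apply, one_mul, mul_one] at h
  exact (left_eq_add.mp h)

lemma delta_natCast (hδ : IsSigmaDerivation (RingHom.id R) δ) (n : ℕ) : δ (n : R) = 0 := by
  induction n with
  | zero => simpa using delta_zero hδ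
  | succ k ih => rw [Nat.cast_succ, hδ.1, ih, delta_one hδ, add_zero]

lemma delta_natCast_mul (hδ : IsSigmaDerivation (RingHom.id R) δ) (n : ℕ) (c : R) :
    δ ((n : R) * c) = (n : R) * δ c := by
  rw [hδ.2, RingHom.id_apply, delta_natCast hδ, zero_mul, add_zero]

lemma ore_pow_mul (hδ : IsSigmaDerivation (RingHom.id R) δ) (f : R →+* S) (x : S)
    (hrel : ∀ r : R, x * f r = f r * x + f (δ r)) :
    ∀ (n : ℕ) (r : R),
      x ^ n * f r = ∑ j ∈ Finset.range (n + 1), f ((n.choose j : R) * δ^[n - j] r) * x ^ j := by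
  intro n
  induction n with
  | zero => intro r; simp
  | succ n ih =>
    intro r
    have h1 : x ^ (n + 1) * f r = x * (x ^ n * f r) := by
      rw [pow_succ', mul_assoc]
    rw [h1, ih, Finset.mul_sum]
    have h2 : ∀ j ∈ Finset.range (n + 1),
        x * (f ((n.choose j : R) * δ^[n - j] r) * x ^ j)
          = f ((n.choose j : R) * δ^[n - j] r) * x ^ (j + 1)
            + f ((n.choose j : R) * δ^[n + 1 - j] r) * x ^ j := by
      intro j hj
      have hjn : j ≤ n := Nat.lt_succ_iff.mp (Finset.mem_range.mp hj)
      have : n + 1 - j = (n - j) + 1 := by omega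
      rw [this, Function.iterate_succ_apply', ← delta_natCast_mul hδ]
      rw [← mul_assoc, hrel, add_mul, mul_assoc, ← pow_succ']
    rw [Finset.sum_congr rfl h2, Finset.sum_add_distrib]
    -- RHS
    have hp : ∀ j, ((n + 1).choose (j + 1) : R) = (n.choose j : R) + (n.choose (j + 1) : R) := by
      intro j
      rw [← Nat.cast_add, Nat.choose_succ_succ]
    rw [Finset.sum_range_succ' (fun j => f (((n+1).choose j : R) * δ^[n + 1 - j] r) * x ^ j) (n+1)]
    have h3 : ∀ j ∈ Finset.range (n + 1),
        f (((n+1).choose (j+1) : R) * δ^[n + 1 - (j+1)] r) * x ^ (j+1)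
          = f ((n.choose j : R) * δ^[n - j] r) * x ^ (j + 1)
            + f ((n.choose (j+1) : R) * δ^[n - j] r) * x ^ (j + 1) := by
      intro j hj
      have : n + 1 - (j + 1) = n - j := by omega
      rw [this, hp j, add_mul, map_add, add_mul]
    rw [Finset.sum_congr rfl h3, Finset.sum_add_distrib]
    have h4 : ∑ j ∈ Finset.range (n + 1), f ((n.choose (j+1) : R) * δ^[n - j] r) * x ^ (j + 1)
        + f (((n+1).choose 0 : R) * δ^[n + 1 - 0] r) * x ^ 0
        = ∑ j ∈ Finset.range (n + 1), f ((n.choose j : R) * δ^[n + 1 - j] r) * x ^ j := by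
      rw [Finset.sum_range_succ' (fun j => f ((n.choose j : R) * δ^[n + 1 - j] r) * x ^ j) n]
      congr 1
      · rw [Finset.sum_range_succ]
        have hz : (n.choose (n+1) : R) = 0 := by simp [Nat.choose_eq_zero_of_lt]
        rw [hz, zero_mul, map_zero, zero_mul, add_zero]
        apply Finset.sum_congr rfl
        intro j hj
        have : n + 1 - (j + 1) = n - j := by omega
        rw [this]
      · simp
    rw [add_assoc, h4]
end aux

/-- If `R` is a commutative domain of characteristic zero and `δ` is a non-zero
derivation, then `R` is a maximal commutative subring of `R[x;id,δ]`. -/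
theorem stmt_5 {R S : Type*} [CommRing R] [IsDomain R] [CharZero R] [Ring S] (δ : R → R)
    (hδ : IsSigmaDerivation (RingHom.id R) δ) (hne : δ ≠ 0)
    (f : R →+* S) (x : S) (hS : IsOreExtension (RingHom.id R) δ f x) :
    Subring.centralizer (Set.range f) = f.range := by
  obtain ⟨r₀, hr₀⟩ : ∃ r, δ r ≠ 0 := by
    by_contra h; push_neg at h; exact hne (funext h)
  have hrel : ∀ r : R, x * f r = f r * x + f (δ r) := by
    intro r; simpa using hS.rel r
  set F : (ℕ →₀ R) → S := fun a => a.sum fun i r => f r * x ^ i with hF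
  have hFadd : ∀ p q : ℕ →₀ R, F (p + q) = F p + F q := fun p q =>
    Finsupp.sum_add_index' (by simp) (by intro i r s; rw [map_add, add_mul])
  let Fh : (ℕ →₀ R) →+ S := AddMonoidHom.mk' F hFadd
  have hFh : ∀ a, Fh a = F a := fun a => rfl
  have Fsingle : ∀ (j : ℕ) (c : R), F (Finsupp.single j c) = f c * x ^ j := fun j c =>
    Finsupp.sum_single_index (by simp)
  ext s
  constructor
  · intro hs
    obtain ⟨a, rfl⟩ := hS.basis.surjective s
    have key : f r₀ * F a = F a * f r₀ :=
      Subring.mem_centralizer_iff.mp hs (f r₀) ⟨r₀, rfl⟩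
    set e : ℕ → ℕ → R := fun i j => (i.choose j : R) * δ^[i - j] r₀ with he
    have h1 : F a * f r₀
        = Fh (a.sum fun i c => ∑ j ∈ Finset.range (i + 1), Finsupp.single j (e i j * c)) := by
      rw [map_finsuppSum, hF]
      rw [Finsupp.sum_mul]
      apply Finsupp.sum_congr
      intro i hi
      rw [mul_assoc, ore_pow_mul hδ f x hrel i r₀, Finset.mul_sum, map_sum]
      apply Finset.sum_congr rfl
      intro j hj
      rw [hFh, Fsingle, ← mul_assoc, ← map_mul, mul_comm (a i)]
    have h2 : f r₀ * F a = Fh (a.sum fun i c => Finsupp.single i (r₀ * c)) := by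
      rw [map_finsuppSum, hF, Finsupp.mul_sum]
      apply Finsupp.sum_congr
      intro i hi
      rw [hFh, Fsingle, ← mul_assoc, ← map_mul]
    have hb : (a.sum fun i c => Finsupp.single i (r₀ * c))
        = a.sum fun i c => ∑ j ∈ Finset.range (i + 1), Finsupp.single j (e i j * c) := by
      apply hS.basis.injective
      show F _ = F _
      rw [← hFh, ← hFh, ← h1, ← h2, key]
    suffices hsupp : ∀ m ∈ a.support, m = 0 by
      refine ⟨a 0, ?_⟩
      have ha : a = Finsupp.single 0 (a 0) := by
        ext m
        rcases eq_or_ne m 0 with rfl | hm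
        · simp
        · rw [Finsupp.single_eq_of_ne' (Ne.symm hm)]
          by_contra h
          exact hm (hsupp m (Finsupp.mem_support_iff.mpr h))
      show f (a 0) = F a
      rw [ha, Fsingle, pow_zero, mul_one, ← ha]
    intro m hm
    by_contra hm0
    have hne' : a.support.Nonempty := ⟨m, hm⟩
    set n := a.support.max' hne' with hn
    have hnmem : n ∈ a.support := Finset.max'_mem _ _
    have hle : ∀ i ∈ a.support, i ≤ n := fun i hi => Finset.le_max' _ i hi
    have hn1 : 1 ≤ n := le_trans (Nat.one_le_iff_ne_zero.mpr hm0) (hle m hm)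
    have hcoef := congrArg (fun g : ℕ →₀ R => g (n - 1)) hb
    simp only [Finsupp.sum_apply, Finsupp.single_apply, Finset.sum_apply'] at hcoef
    -- LHS of hcoef : a.sum fun i c => if i = n-1 then r₀ * c else 0
    -- RHS : a.sum fun i c => ∑ j ∈ range (i+1), if j = n-1 then e i j * c else 0
    rw [Finsupp.sum] at hcoef
    rw [Finsupp.sum] at hcoef
    have hL : ∑ i ∈ a.support, (if i = n - 1 then r₀ * a i else 0)
        = if n - 1 ∈ a.support then r₀ * a (n - 1) else 0 := by
      rw [Finset.sum_ite_eq' a.support (n-1) (fun i => r₀ * a i)]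
    have hR : ∑ i ∈ a.support, (∑ j ∈ Finset.range (i + 1), if j = n - 1 then e i j * a i else 0)
        = (n : R) * δ r₀ * a n + (if n - 1 ∈ a.support then r₀ * a (n - 1) else 0) := by
      have hRinner : ∀ i, (∑ j ∈ Finset.range (i + 1), if j = n - 1 then e i j * a i else 0)
          = if n - 1 ∈ Finset.range (i + 1) then e i (n - 1) * a i else 0 :=
        fun i => Finset.sum_ite_eq' (Finset.range (i + 1)) (n - 1) (fun j => e i j * a i)
      simp only [hRinner]
      rw [← Finset.add_sum_erase _ _ hnmem]
      congr 1
      · have hmem : n - 1 ∈ Finset.range (n + 1) := by simp only [Finset.mem_range]; omega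
        rw [if_pos hmem]
        simp only [he]
        have h5 : n - (n - 1) = 1 := by omega
        have h6 : n.choose (n - 1) = n := by
          rw [Nat.choose_symm hn1, Nat.choose_one_right]
        rw [h5, h6, Function.iterate_one]
      · have hcongr : ∀ i ∈ a.support.erase n,
            (if n - 1 ∈ Finset.range (i + 1) then e i (n - 1) * a i else 0)
              = if i = n - 1 then r₀ * a i else 0 := by
          intro i hi
          have hin : i ∈ a.support := Finset.mem_of_mem_erase hi
          have hiln : i < n := lt_of_le_of_ne (hle i hin) (Finset.ne_of_mem_erase hi)
          rcases eq_or_ne i (n - 1) with rfl | hine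
          · rw [if_pos (by simp only [Finset.mem_range]; omega), if_pos rfl]
            simp [he, Nat.choose_self]
          · rw [if_neg, if_neg hine]
            simp only [Finset.mem_range]
            omega
        rw [Finset.sum_congr rfl hcongr,
          Finset.sum_ite_eq' (a.support.erase n) (n - 1) (fun i => r₀ * a i)]
        apply if_congr ?_ rfl rfl
        rw [Finset.mem_erase]
        exact ⟨fun h => h.2, fun h => ⟨by omega, h⟩⟩
    rw [hL, hR] at hcoef
    have hzero : (n : R) * δ r₀ * a n = 0 := right_eq_add.mp hcoef
    have han : a n ≠ 0 := Finsupp.mem_support_iff.mp hnmem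
    rcases mul_eq_zero.mp hzero with h | h
    · rcases mul_eq_zero.mp h with h' | h'
      · have := Nat.cast_eq_zero.mp h'
        omega
      · exact hr₀ h'
    · exact han h
  · rintro ⟨r, rfl⟩
    apply Subring.mem_centralizer_iff.mpr
    rintro g ⟨r', rfl⟩
    rw [← map_mul, ← map_mul, mul_comm]
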